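/- arXiv:math/0411648 — 2 statements merged into one kernel-verified Lean document; each statement's English description precedes it below -/
import Mathlib

section
/- Let n ≥ 2. The function g : ℝⁿ → ℝ defined by g(z) = (|z| · log|z|)⁻¹ for |z| ≥ 2 and g(z) = 0 for |z| < 2 belongs to L^p(ℝⁿ) for every p ≥ n, but ∫_{ℝⁿ} g(z) · |z|^{1-n} 𝟙_{|z|≥2} dz = +∞. -/
open MeasureTheory Set Filter
open scoped ENNReal Topology

lemma lintegral_fun_norm_euclidean (n : ℕ) (hn : 2 ≤ n) (f : ℝ → ℝ≥0∞) (hf : Measurable f) :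
    ∫⁻ x : EuclideanSpace ℝ (Fin n), f ‖x‖ =
      (volume : Measure (EuclideanSpace ℝ (Fin n))).toSphere Set.univ *
        ∫⁻ r in Ioi (0:ℝ), ENNReal.ofReal (r ^ (n - 1)) * f r := by
  set E := EuclideanSpace ℝ (Fin n)
  haveI : Nontrivial E := by
    have : Nonempty (Fin n) := ⟨⟨0, by omega⟩⟩
    infer_instance
  have hdim : Module.finrank ℝ E = n := finrank_euclideanSpace_fin
  have h0 : ∫⁻ x : E, f ‖x‖ =
      ∫⁻ x : ({(0:E)}ᶜ : Set E), f ‖(x : E)‖ ∂((volume : Measure E).comap Subtype.val) := by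
    rw [lintegral_subtype_comap (measurableSet_singleton (0:E)).compl (fun x => f ‖x‖),
      MeasureTheory.restrict_compl_singleton]
  have h1 := ((volume : Measure E).measurePreserving_homeomorphUnitSphereProd).lintegral_comp_emb
    (Homeomorph.measurableEmbedding _)
    (fun p : Metric.sphere (0:E) 1 × Ioi (0:ℝ) => f p.2)
  have hm : Measurable (fun p : Metric.sphere (0:E) 1 × Ioi (0:ℝ) => f ↑p.2) :=
    hf.comp (measurable_subtype_coe.comp measurable_snd)
  have h2 := lintegral_prod (μ := (volume : Measure E).toSphere)
      (ν := Measure.volumeIoiPow (Module.finrank ℝ E - 1))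
      (fun p : Metric.sphere (0:E) 1 × Ioi (0:ℝ) => f ↑p.2) hm.aemeasurable
  simp only [lintegral_const] at h2
  have hm2 : Measurable (fun y : Ioi (0:ℝ) => f ↑y) := hf.comp measurable_subtype_coe
  have hmd : Measurable (fun r : Ioi (0:ℝ) => ENNReal.ofReal (r.1 ^ (Module.finrank ℝ E - 1))) :=
    (measurable_subtype_coe.pow_const _).ennreal_ofReal
  have h3 : ∫⁻ y : Ioi (0:ℝ), f y ∂(Measure.volumeIoiPow (Module.finrank ℝ E - 1)) =
      ∫⁻ r in Ioi (0:ℝ), ENNReal.ofReal (r ^ (n - 1)) * f r := by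
    rw [Measure.volumeIoiPow, lintegral_withDensity_eq_lintegral_mul _ hmd hm2, hdim]
    exact lintegral_subtype_comap measurableSet_Ioi fun r => ENNReal.ofReal (r ^ (n - 1)) * f r
  calc ∫⁻ x : E, f ‖x‖
      = ∫⁻ x : ({(0:E)}ᶜ : Set E), f ‖(x : E)‖ ∂((volume : Measure E).comap Subtype.val) := h0
    _ = ∫⁻ p : Metric.sphere (0:E) 1 × Ioi (0:ℝ), f p.2
        ∂((volume : Measure E).toSphere.prod (.volumeIoiPow (Module.finrank ℝ E - 1))) := by
          rw [← h1]; congr 1; funext x; simp [homeomorphUnitSphereProd]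
    _ = (∫⁻ y : Ioi (0:ℝ), f y ∂(Measure.volumeIoiPow (Module.finrank ℝ E - 1))) *
        (volume : Measure E).toSphere Set.univ := h2
    _ = _ := by rw [h3, mul_comm]

lemma integrableOn_inv_mul_log_rpow (p : ℝ) (hp : 1 < p) :
    IntegrableOn (fun r : ℝ => r⁻¹ * Real.log r ^ (-p)) (Ioi 2) := by
  have hlog2 : 0 < Real.log 2 := Real.log_pos one_lt_two
  have hderiv : ∀ x ∈ Ici (2:ℝ), HasDerivAt (fun r => (1-p)⁻¹ * Real.log r ^ (1-p))
      (x⁻¹ * Real.log x ^ (-p)) x := by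
    intro x hx
    have hx2 : (2:ℝ) ≤ x := hx
    have hx0 : 0 < x := by linarith
    have hlx : 0 < Real.log x := Real.log_pos (by linarith)
    have h1 : HasDerivAt Real.log x⁻¹ x := Real.hasDerivAt_log hx0.ne'
    have h2 : HasDerivAt (fun y : ℝ => y ^ (1-p)) ((1-p) * Real.log x ^ (1-p-1)) (Real.log x) :=
      Real.hasDerivAt_rpow_const (Or.inl hlx.ne')
    have h3 := (h2.comp x h1).const_mul ((1-p)⁻¹)
    refine h3.congr_deriv ?_
    have hp1 : (1:ℝ) - p ≠ 0 := by intro h; linarith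
    have he : (1:ℝ) - p - 1 = -p := by ring
    rw [he]
    field_simp
  have htend : Tendsto (fun r : ℝ => (1-p)⁻¹ * Real.log r ^ (1-p)) atTop (𝓝 ((1-p)⁻¹ * 0)) := by
    apply Tendsto.const_mul
    have := (tendsto_rpow_neg_atTop (by linarith : (0:ℝ) < p - 1)).comp Real.tendsto_log_atTop
    simpa [Function.comp_def, neg_sub] using this
  refine integrableOn_Ioi_deriv_of_nonneg' hderiv (fun x hx => ?_) htend
  have hx2 : (2:ℝ) < x := hx
  exact mul_nonneg (inv_nonneg.2 (by linarith)) (Real.rpow_nonneg (Real.log_nonneg (by linarith)) _)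

lemma lintegral_inv_mul_log_top :
    ∫⁻ r in Ioi (2:ℝ), ENNReal.ofReal ((r * Real.log r)⁻¹) = ⊤ := by
  by_contra hne
  have hlog2 : 0 < Real.log 2 := Real.log_pos one_lt_two
  set ψ : ℝ → ℝ := fun r => (r * Real.log r)⁻¹ with hψ
  have hψm : Measurable ψ := (measurable_id.mul Real.measurable_log).inv
  have hnn : ∀ r ∈ Ioi (2:ℝ), 0 ≤ ψ r := by
    intro r hr
    have h2 : (2:ℝ) < r := hr
    have hlx : 0 < Real.log r := Real.log_pos (by linarith)
    have : 0 < r * Real.log r := mul_pos (by linarith) hlx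
    positivity
  have hInt : IntegrableOn ψ (Ioi 2) := by
    constructor
    · exact hψm.aestronglyMeasurable.restrict
    · show (∫⁻ a in Ioi (2:ℝ), ‖ψ a‖₊) < ⊤
      have : ∫⁻ a in Ioi (2:ℝ), (‖ψ a‖₊ : ℝ≥0∞) = ∫⁻ a in Ioi (2:ℝ), ENNReal.ofReal (ψ a) := by
        refine setLIntegral_congr_fun measurableSet_Ioi (fun r hr => ?_)
        rw [← enorm_eq_nnnorm, Real.enorm_eq_ofReal (hnn r hr)]
      rw [this]
      exact lt_top_iff_ne_top.2 hne
  have h2y : ∀ y : ℝ, 2 ≤ y → ∫ x in (2:ℝ)..y, ψ x =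
      Real.log (Real.log y) - Real.log (Real.log 2) := by
    intro y hy
    apply intervalIntegral.integral_eq_sub_of_hasDerivAt
    · intro x hx
      rw [uIcc_of_le hy] at hx
      have hx2 : 2 ≤ x := hx.1
      have hx0 : (0:ℝ) < x := by linarith
      have hlx : 0 < Real.log x := Real.log_pos (by linarith)
      have h := (Real.hasDerivAt_log hlx.ne').comp x (Real.hasDerivAt_log hx0.ne')
      refine h.congr_deriv ?_
      rw [hψ]
      simp only [Function.comp_def]
      rw [mul_inv, mul_comm]
    · rw [intervalIntegrable_iff_integrableOn_Ioc_of_le hy]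
      exact hInt.mono_set Ioc_subset_Ioi_self
  have htendI := intervalIntegral_tendsto_integral_Ioi 2 hInt tendsto_id
  have heq : (fun y => ∫ x in (2:ℝ)..y, ψ x) =ᶠ[atTop]
      fun y => Real.log (Real.log y) - Real.log (Real.log 2) := by
    filter_upwards [eventually_ge_atTop 2] with y hy using h2y y hy
  have hT : Tendsto (fun y => Real.log (Real.log y) - Real.log (Real.log 2)) atTop atTop := by
    simp only [sub_eq_add_neg]
    exact tendsto_atTop_add_const_right _ _
      (Real.tendsto_log_atTop.comp Real.tendsto_log_atTop)
  exact not_tendsto_atTop_of_tendsto_nhds (htendI.congr' heq) hT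

theorem log_counterexample_pairing (n : ℕ) (hn : 2 ≤ n)
    (g : EuclideanSpace ℝ (Fin n) → ℝ)
    (hg : ∀ z, g z = if 2 ≤ ‖z‖ then (‖z‖ * Real.log ‖z‖)⁻¹ else 0) :
    (∀ p : ℝ, (n : ℝ) ≤ p → MemLp g (ENNReal.ofReal p) volume) ∧
    (∫⁻ z in {z : EuclideanSpace ℝ (Fin n) | 2 ≤ ‖z‖},
        ENNReal.ofReal (g z * ‖z‖ ^ ((1:ℝ) - n))) = ⊤ := by
  haveI : Nontrivial (EuclideanSpace ℝ (Fin n)) := by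
    have : Nonempty (Fin n) := ⟨⟨0, by omega⟩⟩
    infer_instance
  have hdim : Module.finrank ℝ (EuclideanSpace ℝ (Fin n)) = n := finrank_euclideanSpace_fin
  have hlog2 : 0 < Real.log 2 := Real.log_pos one_lt_two
  set G : ℝ → ℝ := fun r => if 2 ≤ r then (r * Real.log r)⁻¹ else 0 with hG
  have hGmeas : Measurable G := by
    apply Measurable.ite (measurableSet_le measurable_const measurable_id)
    · exact (measurable_id.mul Real.measurable_log).inv
    · exact measurable_const
  have hGnonneg : ∀ r, 0 ≤ G r := by
    intro r
    by_cases h : 2 ≤ r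
    · have hlr : 0 < Real.log r := Real.log_pos (by linarith)
      have hpos : 0 < r * Real.log r := mul_pos (by linarith) hlr
      simp only [hG, if_pos h]
      positivity
    · simp [hG, h]
  have hGle : ∀ r, r ≤ 2 → G r ≤ (2 * Real.log 2)⁻¹ := by
    intro r hr
    by_cases h : 2 ≤ r
    · have : r = 2 := le_antisymm hr h
      simp [hG, this]
    · simp only [hG, if_neg h]
      positivity
  have hgG : ∀ z : EuclideanSpace ℝ (Fin n), g z = G ‖z‖ := fun z => hg z
  have hC_ne_top : (volume : Measure (EuclideanSpace ℝ (Fin n))).toSphere Set.univ ≠ ⊤ :=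
    measure_ne_top _ _
  have hn1 : ((n : ℝ) - 1) = ((n - 1 : ℕ) : ℝ) := by
    push_cast [Nat.cast_sub (by omega : 1 ≤ n)]
    ring
  constructor
  · -- part 1
    intro p hp
    have hp2 : (2:ℝ) ≤ p := le_trans (by exact_mod_cast hn) hp
    have hp0 : 0 < p := by linarith
    have hp1 : 1 < p := by linarith
    refine ⟨(hGmeas.comp measurable_norm).aestronglyMeasurable.congr
      (ae_of_all _ fun z => (hgG z).symm), ?_⟩
    rw [eLpNorm_eq_lintegral_rpow_enorm_toReal (by simpa using hp0)
      ENNReal.ofReal_ne_top, ENNReal.toReal_ofReal hp0.le]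
    refine ENNReal.rpow_lt_top_of_nonneg (by positivity) ?_
    set h : ℝ → ℝ≥0∞ := fun r => ENNReal.ofReal (G r) ^ p with hh
    have hhmeas : Measurable h := hGmeas.ennreal_ofReal.pow_const p
    have hJ : ∫⁻ z : EuclideanSpace ℝ (Fin n), ‖g z‖ₑ ^ p = ∫⁻ z : EuclideanSpace ℝ (Fin n), h ‖z‖ := by
      refine lintegral_congr fun z => ?_
      rw [hgG z, hh, Real.enorm_eq_ofReal (hGnonneg _)]
    rw [hJ, lintegral_fun_norm_euclidean n hn h hhmeas]
    refine ENNReal.mul_ne_top hC_ne_top ?_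
    have hsplit : ∫⁻ r in Ioi (0:ℝ), ENNReal.ofReal (r ^ (n - 1)) * h r =
        (∫⁻ r in Ioc (0:ℝ) 2, ENNReal.ofReal (r ^ (n - 1)) * h r) +
        ∫⁻ r in Ioi (2:ℝ), ENNReal.ofReal (r ^ (n - 1)) * h r := by
      rw [← lintegral_union measurableSet_Ioi Ioc_disjoint_Ioi_same,
        Ioc_union_Ioi_eq_Ioi (by norm_num : (0:ℝ) ≤ 2)]
    rw [hsplit]
    refine ENNReal.add_ne_top.2 ⟨?_, ?_⟩
    · -- compact part
      set c : ℝ≥0∞ := ENNReal.ofReal (2 ^ (n - 1)) * ENNReal.ofReal ((2 * Real.log 2)⁻¹) ^ p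
        with hc
      have hlec : ∀ r ∈ Ioc (0:ℝ) 2, ENNReal.ofReal (r ^ (n - 1)) * h r ≤ c := by
        intro r hr
        refine mul_le_mul' (ENNReal.ofReal_le_ofReal
          (pow_le_pow_left₀ hr.1.le hr.2 _)) ?_
        exact ENNReal.rpow_le_rpow (ENNReal.ofReal_le_ofReal (hGle r hr.2)) hp0.le
      have hcne : c ≠ ⊤ := ENNReal.mul_ne_top ENNReal.ofReal_ne_top
        (ENNReal.rpow_lt_top_of_nonneg hp0.le ENNReal.ofReal_ne_top).ne
      refine (lt_of_le_of_lt (setLIntegral_mono' measurableSet_Ioc hlec) ?_).ne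
      rw [setLIntegral_const]
      refine ENNReal.mul_lt_top hcne.lt_top ?_
      rw [Real.volume_Ioc]
      exact ENNReal.ofReal_lt_top
    · -- tail part
      have hle : ∀ r ∈ Ioi (2:ℝ), ENNReal.ofReal (r ^ (n - 1)) * h r ≤
          ENNReal.ofReal (r⁻¹ * Real.log r ^ (-p)) := by
        intro r hr
        have hr2 : (2:ℝ) < r := hr
        have hr0 : (0:ℝ) < r := by linarith
        have hlr : 0 < Real.log r := Real.log_pos (by linarith)
        have hGr : G r = (r * Real.log r)⁻¹ := by simp [hG, hr2.le]
        rw [hh]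
        simp only [hGr]
        rw [ENNReal.ofReal_rpow_of_nonneg (by positivity) hp0.le,
          ← ENNReal.ofReal_mul (by positivity)]
        refine ENNReal.ofReal_le_ofReal ?_
        have key : ((r * Real.log r)⁻¹) ^ p = r ^ (-p) * Real.log r ^ (-p) := by
          rw [← Real.mul_rpow (by positivity) (by positivity),
            Real.inv_rpow (by positivity), Real.rpow_neg (by positivity)]
        rw [key, ← mul_assoc]
        have hpow : r ^ (n - 1) * r ^ (-p) ≤ r⁻¹ := by
          rw [← Real.rpow_natCast r (n - 1), ← Real.rpow_add hr0, ← Real.rpow_neg_one r]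
          apply Real.rpow_le_rpow_of_exponent_le (by linarith)
          rw [← hn1]
          linarith
        exact mul_le_mul_of_nonneg_right hpow (Real.rpow_nonneg hlr.le _)
      exact (lt_of_le_of_lt (setLIntegral_mono' measurableSet_Ioi hle)
        (integrableOn_inv_mul_log_rpow p hp1).setLIntegral_lt_top).ne
  · -- part 2
    set k : ℝ → ℝ≥0∞ := fun r =>
      if 2 ≤ r then ENNReal.ofReal ((r * Real.log r)⁻¹ * r ^ ((1:ℝ) - n)) else 0 with hk
    have hkmeas : Measurable k := by
      apply Measurable.ite (measurableSet_le measurable_const measurable_id)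
      · exact ((measurable_id.mul Real.measurable_log).inv.mul
          (measurable_id.pow_const _)).ennreal_ofReal
      · exact measurable_const
    have hS : MeasurableSet {z : EuclideanSpace ℝ (Fin n) | 2 ≤ ‖z‖} :=
      measurableSet_le measurable_const measurable_norm
    have hind : ∫⁻ z in {z : EuclideanSpace ℝ (Fin n) | 2 ≤ ‖z‖},
        ENNReal.ofReal (g z * ‖z‖ ^ ((1:ℝ) - n)) = ∫⁻ z : EuclideanSpace ℝ (Fin n), k ‖z‖ := by
      rw [← lintegral_indicator hS]
      refine lintegral_congr fun z => ?_
      by_cases hz : 2 ≤ ‖z‖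
      · rw [indicator_of_mem (by exact hz) _, hk]
        simp only [if_pos hz]
        rw [hg z, if_pos hz]
      · rw [indicator_of_notMem (by exact hz) _, hk]
        simp [hz]
    rw [hind, lintegral_fun_norm_euclidean n hn k hkmeas]
    have hIoi : ∫⁻ r in Ioi (2:ℝ), ENNReal.ofReal (r ^ (n - 1)) * k r = ⊤ := by
      have hcongr : ∫⁻ r in Ioi (2:ℝ), ENNReal.ofReal (r ^ (n - 1)) * k r =
          ∫⁻ r in Ioi (2:ℝ), ENNReal.ofReal ((r * Real.log r)⁻¹) := by
        refine setLIntegral_congr_fun measurableSet_Ioi (fun r hr => ?_)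
        have hr2 : (2:ℝ) < r := hr
        have hr0 : (0:ℝ) < r := by linarith
        have hlr : 0 < Real.log r := Real.log_pos (by linarith)
        rw [hk]
        simp only [if_pos hr2.le]
        rw [← ENNReal.ofReal_mul (by positivity)]
        congr 1
        rw [← mul_assoc, mul_comm (r ^ (n-1)) ((r * Real.log r)⁻¹), mul_assoc]
        have : r ^ (n - 1) * r ^ ((1:ℝ) - n) = 1 := by
          rw [← Real.rpow_natCast r (n - 1), ← Real.rpow_add hr0, ← hn1]
          norm_num
        rw [this, mul_one]
      rw [hcongr]
      exact lintegral_inv_mul_log_top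
    have hge : ∫⁻ r in Ioi (0:ℝ), ENNReal.ofReal (r ^ (n - 1)) * k r = ⊤ := by
      have := lintegral_mono_set (μ := volume)
        (f := fun r : ℝ => ENNReal.ofReal (r ^ (n - 1)) * k r)
        (Ioi_subset_Ioi (by norm_num : (0:ℝ) ≤ 2))
      rw [hIoi] at this
      exact top_le_iff.1 this
    rw [hge]
    refine ENNReal.mul_top ?_
    rw [Measure.toSphere_apply_univ, hdim]
    refine mul_ne_zero ?_ ?_
    · exact_mod_cast (by omega : n ≠ 0)
    · exact (Metric.measure_ball_pos _ _ one_pos).ne'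
end

section
/- Let z, z' ∈ ℝⁿ with |z'| ≥ 2|z| and z' ≠ 0. Then | |z - z'| - |z'| + z·(z'/|z'|) | ≤ 2|z|²/|z'|. -/
theorem distance_expansion (n : ℕ) (z z' : EuclideanSpace ℝ (Fin n))
    (h : 2 * ‖z‖ ≤ ‖z'‖) (hz' : z' ≠ 0) :
    |‖z - z'‖ - ‖z'‖ + (inner ℝ z z' : ℝ) / ‖z'‖| ≤ 2 * ‖z‖ ^ 2 / ‖z'‖ := by
  have hr : (0:ℝ) < ‖z'‖ := norm_pos_iff.mpr hz'
  have hsq : ‖z - z'‖^2 = ‖z‖^2 - 2*(inner ℝ z z' : ℝ) + ‖z'‖^2 := norm_sub_sq_real z z'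
  have hCS : |(inner ℝ z z' : ℝ)| ≤ ‖z‖ * ‖z'‖ := abs_real_inner_le_norm z z'
  have htri : ‖z'‖ - ‖z‖ ≤ ‖z - z'‖ := by
    have := norm_sub_norm_le z' z
    rwa [norm_sub_rev] at this
  have hm : (0:ℝ) ≤ ‖z‖ := norm_nonneg z
  have ha : (0:ℝ) ≤ ‖z - z'‖ := norm_nonneg _
  have heq : ‖z - z'‖ - ‖z'‖ + (inner ℝ z z' : ℝ) / ‖z'‖
      = (‖z - z'‖*‖z'‖ - ‖z'‖^2 + (inner ℝ z z' : ℝ)) / ‖z'‖ := by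
    field_simp
  rw [heq, abs_div, abs_of_pos hr]
  gcongr
  rw [abs_le] at hCS ⊢
  obtain ⟨h1, h2⟩ := hCS
  constructor
  · nlinarith [sq_nonneg (‖z - z'‖ - ‖z'‖), sq_nonneg (‖z - z'‖ + ‖z'‖), sq_nonneg ‖z‖, mul_nonneg ha hr.le, sq_nonneg (‖z'‖ - 2*‖z‖)]
  · nlinarith [sq_nonneg (‖z - z'‖ - ‖z'‖), sq_nonneg (‖z - z'‖ + ‖z'‖), sq_nonneg ‖z‖, mul_nonneg ha hr.le, sq_nonneg (‖z'‖ - 2*‖z‖)]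
end
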